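/- Let G be a subgroup of Sym(X). Then G is Roelcke precompact (with respect to the topology of pointwise convergence) if and only if for every subset Y ⊆ X that is a union of finitely many G-orbits, G acts oligomorphically on Y, i.e., G has finitely many orbits on Yⁿ for every n. -/

import Mathlib

open Pointwise

/-- Topology of pointwise convergence on the symmetric group of a (discrete) set. -/
instance permTop (M : Type*) : TopologicalSpace (Equiv.Perm M) :=
  letI : TopologicalSpace M := ⊥
  TopologicalSpace.induced
    (fun g => ((fun x => g x, fun x => g.symm x) : (M → M) × (M → M))) inferInstance

/-- A topological group is Roelcke precompact if every open neighbourhood `U` of the identity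
admits a finite set `E` with `G = U * E * U`. -/
def RoelckePrecompact (G : Type*) [Group G] [TopologicalSpace G] : Prop :=
  ∀ U : Set G, IsOpen U → (1 : G) ∈ U →
    ∃ E : Finset G, ∀ x : G, ∃ u₁ ∈ U, ∃ e ∈ E, ∃ u₂ ∈ U, x = u₁ * e * u₂

/-- `Y` is a union of finitely many `G`-orbits. -/
def IsFinOrbitUnion {X : Type*} (G : Subgroup (Equiv.Perm X)) (Y : Set X) : Prop :=
  ∃ S : Finset X, Y = ⋃ a ∈ S, MulAction.orbit G a

/-- `G` acts oligomorphically on `Y`: finitely many orbits on `Yⁿ` for all `n`. -/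
def Oligo {X : Type*} (G : Subgroup (Equiv.Perm X)) (Y : Set X) : Prop :=
  ∀ n : ℕ, ∃ T : Finset (Fin n → X), ∀ f : Fin n → X, (∀ i, f i ∈ Y) →
    ∃ t ∈ T, ∃ g ∈ G, ∀ i, g (t i) = f i

/-- `G` is locally oligomorphic on `X`. -/
def LocallyOligo {X : Type*} (G : Subgroup (Equiv.Perm X)) : Prop :=
  ∀ Y : Set X, IsFinOrbitUnion G Y → Oligo G Y

/-- The pointwise stabilizer of `E` in `G ≤ Sym(M)`. -/
def ptStab {M : Type*} (G : Subgroup (Equiv.Perm M)) (E : Set M) : Subgroup (Equiv.Perm M) :=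
  G ⊓ ⨅ a ∈ E, MulAction.stabilizer (Equiv.Perm M) a

/-- The algebraic closure of `E`: the union of the finite orbits of the pointwise
stabilizer of `E` in `G`. -/
def acl {M : Type*} (G : Subgroup (Equiv.Perm M)) (E : Set M) : Set M :=
  {x | (MulAction.orbit (ptStab G E) x).Finite}

/-- The intersection of the open finite-index subgroups of a topological group. -/
def Gcirc (G : Type*) [Group G] [TopologicalSpace G] : Subgroup G :=
  ⨅ U ∈ {U : Subgroup G | IsOpen (U : Set G) ∧ U.index ≠ 0}, U

-- probes

lemma isOpen_fix {X : Type*} (a : X) : IsOpen {g : Equiv.Perm X | g a = a} := by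
  letI : TopologicalSpace X := ⊥
  haveI : DiscreteTopology X := ⟨rfl⟩
  refine isOpen_induced_iff.mpr ?_
  refine ⟨Prod.fst ⁻¹' ((fun p : X → X => p a) ⁻¹' {a}), ?_, ?_⟩
  · exact ((continuous_apply a).comp continuous_fst).isOpen_preimage _ (isOpen_discrete _)
  · rfl

lemma VF_open {X : Type*} (G : Subgroup (Equiv.Perm X)) (F : Finset X) :
    IsOpen {g : G | ∀ a ∈ F, (g : Equiv.Perm X) a = a} := by
  have h : {g : G | ∀ a ∈ F, (g : Equiv.Perm X) a = a}
      = Subtype.val ⁻¹' (⋂ a ∈ F, {g : Equiv.Perm X | g a = a}) := by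
    ext g; simp
  rw [h]
  exact ((isOpen_biInter_finset fun a _ => isOpen_fix a)).preimage continuous_subtype_val

lemma exists_finset_fix_subset {X : Type*} {U : Set (Equiv.Perm X)} (hU : IsOpen U)
    (h1 : (1 : Equiv.Perm X) ∈ U) :
    ∃ F : Finset X, {g : Equiv.Perm X | ∀ a ∈ F, g a = a} ⊆ U := by
  classical
  letI : TopologicalSpace X := ⊥
  haveI : DiscreteTopology X := ⟨rfl⟩
  obtain ⟨t, ht, rfl⟩ := isOpen_induced_iff.mp hU
  have hmem : t ∈ nhds ((fun x : X => x, fun x : X => x) : (X → X) × (X → X)) := by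
    refine ht.mem_nhds ?_
    exact h1
  rw [nhds_prod_eq, Filter.mem_prod_iff] at hmem
  obtain ⟨t₁, h₁, t₂, h₂, hsub⟩ := hmem
  rw [nhds_pi, Filter.mem_pi] at h₁ h₂
  obtain ⟨I₁, hI₁, s₁, hs₁, hp₁⟩ := h₁
  obtain ⟨I₂, hI₂, s₂, hs₂, hp₂⟩ := h₂
  refine ⟨hI₁.toFinset ∪ hI₂.toFinset, ?_⟩
  intro g hg
  simp only [Set.mem_setOf_eq, Finset.mem_union, Set.Finite.mem_toFinset] at hg
  refine Set.mem_preimage.mpr (hsub ⟨hp₁ ?_, hp₂ ?_⟩)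
  · intro a ha
    have hga : g a = a := hg a (Or.inl ha)
    have := hs₁ a
    rw [nhds_discrete, Filter.mem_pure] at this
    simpa [hga] using this
  · intro a ha
    have hga : g a = a := hg a (Or.inr ha)
    have hsym : g.symm a = a := by
      conv_lhs => rw [← hga]
      exact g.symm_apply_apply a
    have := hs₂ a
    rw [nhds_discrete, Filter.mem_pure] at this
    simpa [hsym] using this

lemma exists_finset_fix_subset' {X : Type*} {G : Subgroup (Equiv.Perm X)} {U : Set G}
    (hU : IsOpen U) (h1 : (1 : G) ∈ U) :
    ∃ F : Finset X, {g : G | ∀ a ∈ F, (g : Equiv.Perm X) a = a} ⊆ U := by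
  obtain ⟨W, hW, rfl⟩ := isOpen_induced_iff.mp hU
  obtain ⟨F, hF⟩ := exists_finset_fix_subset hW h1
  exact ⟨F, fun g hg => hF hg⟩

lemma rp_to_lo {X : Type*} (G : Subgroup (Equiv.Perm X)) (hRP : RoelckePrecompact G) :
    ∀ Y : Set X, IsFinOrbitUnion G Y → Oligo G Y := by
  classical
  rintro Y ⟨S, rfl⟩ n
  induction n with
  | zero =>
    exact ⟨{fun i => i.elim0}, fun f _ =>
      ⟨_, Finset.mem_singleton_self _, 1, G.one_mem, fun i => i.elim0⟩⟩
  | succ n ih =>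
    obtain ⟨T, hT⟩ := ih
    set V : (Fin n → X) → X → Set G := fun t s =>
      {u : G | ∀ a ∈ insert s (Finset.image t Finset.univ), (u : Equiv.Perm X) a = a} with hV
    have hVopen : ∀ t s, IsOpen (V t s) := fun t s => VF_open G _
    have hV1 : ∀ t s, (1 : G) ∈ V t s := by intro t s a _; rfl
    choose E hE using fun (t : Fin n → X) (s : X) => hRP (V t s) (hVopen t s) (hV1 t s)
    refine ⟨T.biUnion fun t => S.biUnion fun s =>
      (E t s).image fun e : G => Fin.cons ((e : Equiv.Perm X) s) t, ?_⟩
    intro f hf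
    obtain ⟨t, htT, g, hg, hgt⟩ := hT (fun i => f i.succ) (fun i => hf i.succ)
    have h0 : f 0 ∈ ⋃ a ∈ S, MulAction.orbit G a := hf 0
    rw [Set.mem_iUnion₂] at h0
    obtain ⟨s, hsS, hforb⟩ := h0
    obtain ⟨h, hh⟩ := hforb
    set gG : G := ⟨g, hg⟩ with hgG
    obtain ⟨u₁, hu₁, e, he, u₂, hu₂, heq⟩ := hE t s (gG⁻¹ * h)
    refine ⟨Fin.cons ((e : Equiv.Perm X) s) t, ?_, (gG * u₁ : G), (gG * u₁).2, ?_⟩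
    · refine Finset.mem_biUnion.mpr ⟨t, htT, Finset.mem_biUnion.mpr
        ⟨s, hsS, Finset.mem_image_of_mem _ he⟩⟩
    · intro i
      have hu₂s : (u₂ : Equiv.Perm X) s = s := hu₂ s (Finset.mem_insert_self _ _)
      have hu₁t : ∀ j, (u₁ : Equiv.Perm X) (t j) = t j := fun j =>
        hu₁ (t j) (Finset.mem_insert_of_mem (Finset.mem_image.mpr ⟨j, Finset.mem_univ _, rfl⟩))
      have hhs : (h : Equiv.Perm X) s = f 0 := hh
      have heval : ((gG⁻¹ * h : G) : Equiv.Perm X) s = ((u₁ * e * u₂ : G) : Equiv.Perm X) s := by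
        rw [heq]
      simp only [Subgroup.coe_mul, Equiv.Perm.mul_apply, InvMemClass.coe_inv, hu₂s, hhs] at heval
      -- heval : g⁻¹ (f 0) = u₁ (e s)
      refine Fin.cases ?_ ?_ i
      · simp only [Fin.cons_zero, Subgroup.coe_mul, Equiv.Perm.mul_apply]
        rw [← heval]
        simp [hgG]
      · intro j
        simp only [Fin.cons_succ, Subgroup.coe_mul, Equiv.Perm.mul_apply, hu₁t]
        exact hgt j

lemma lo_to_rp {X : Type*} (G : Subgroup (Equiv.Perm X))
    (hLO : ∀ Y : Set X, IsFinOrbitUnion G Y → Oligo G Y) : RoelckePrecompact G := by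
  classical
  intro U hUopen hU1
  obtain ⟨F, hF⟩ := exists_finset_fix_subset' hUopen hU1
  set m := F.card with hm
  set a : Fin m → X := fun i => ((F.equivFin.symm i : F) : X) with ha
  have haF : ∀ i, a i ∈ F := fun i => (F.equivFin.symm i).2
  have haSurj : ∀ b ∈ F, ∃ i, a i = b := by
    intro b hb
    exact ⟨F.equivFin ⟨b, hb⟩, by simp [ha]⟩
  set Y : Set X := ⋃ b ∈ F, MulAction.orbit G b with hY
  set c : G → Fin (m + m) → X :=
    fun x => Fin.append a (fun i => (x : Equiv.Perm X) (a i)) with hc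
  obtain ⟨T, hT⟩ := hLO Y ⟨F, rfl⟩ (m + m)
  set Lands : (Fin (m + m) → X) → G → Prop :=
    fun t x => ∃ g ∈ G, ∀ i, g (t i) = c x i with hL
  set ch : (Fin (m + m) → X) → G :=
    fun t => if h : ∃ x : G, Lands t x then h.choose else 1 with hch
  refine ⟨T.image ch, ?_⟩
  intro x
  have hcY : ∀ i, c x i ∈ Y := by
    intro i
    refine Fin.addCases ?_ ?_ i
    · intro j
      rw [hc]
      simp only [Fin.append_left]
      exact Set.mem_biUnion (haF j) (MulAction.mem_orbit_self _)
    · intro j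
      rw [hc]
      simp only [Fin.append_right]
      exact Set.mem_biUnion (haF j) (MulAction.mem_orbit _ x)
  obtain ⟨t, htT, g, hg, hgt⟩ := hT (c x) hcY
  have hex : ∃ y : G, Lands t y := ⟨x, g, hg, hgt⟩
  have hche : Lands t (ch t) := by
    rw [hch]; simp only [dif_pos hex]; exact hex.choose_spec
  set e : G := ch t with he
  obtain ⟨g', hg', hg't⟩ := hche
  -- h := g * g'⁻¹
  set hp : Equiv.Perm X := g * g'⁻¹ with hhp
  have hpG : hp ∈ G := mul_mem hg (inv_mem hg')
  set u₁ : G := ⟨hp, hpG⟩ with hu₁def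
  -- key computations
  have key1 : ∀ i, hp (a i) = a i := by
    intro i
    have h1 : g' (t (Fin.castAdd m i)) = a i := by
      have := hg't (Fin.castAdd m i); simpa [hc, Fin.append_left] using this
    have h2 : g (t (Fin.castAdd m i)) = a i := by
      have := hgt (Fin.castAdd m i); simpa [hc, Fin.append_left] using this
    calc hp (a i) = g (g'⁻¹ (a i)) := rfl
      _ = g (g'⁻¹ (g' (t (Fin.castAdd m i)))) := by rw [h1]
      _ = g (t (Fin.castAdd m i)) := by rw [Equiv.Perm.inv_def, Equiv.symm_apply_apply]
      _ = a i := h2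
  have key2 : ∀ i, hp ((e : Equiv.Perm X) (a i)) = (x : Equiv.Perm X) (a i) := by
    intro i
    have h1 : g' (t (Fin.natAdd m i)) = (e : Equiv.Perm X) (a i) := by
      have := hg't (Fin.natAdd m i); simp only [hc] at this; rwa [Fin.append_right] at this
    have h2 : g (t (Fin.natAdd m i)) = (x : Equiv.Perm X) (a i) := by
      have := hgt (Fin.natAdd m i); simp only [hc] at this; rwa [Fin.append_right] at this
    calc hp ((e : Equiv.Perm X) (a i)) = g (g'⁻¹ ((e : Equiv.Perm X) (a i))) := rfl
      _ = g (g'⁻¹ (g' (t (Fin.natAdd m i)))) := by rw [h1]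
      _ = g (t (Fin.natAdd m i)) := by rw [Equiv.Perm.inv_def, Equiv.symm_apply_apply]
      _ = (x : Equiv.Perm X) (a i) := h2
  set u₂ : G := e⁻¹ * u₁⁻¹ * x with hu₂def
  refine ⟨u₁, hF ?_, e, Finset.mem_image_of_mem _ htT, u₂, hF ?_, by rw [hu₂def]; group⟩
  · intro b hb
    obtain ⟨i, rfl⟩ := haSurj b hb
    exact key1 i
  · intro b hb
    obtain ⟨i, rfl⟩ := haSurj b hb
    have : (x : Equiv.Perm X) (a i) = hp ((e : Equiv.Perm X) (a i)) := (key2 i).symm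
    rw [hu₂def]
    simp only [Subgroup.coe_mul, InvMemClass.coe_inv, Equiv.Perm.mul_apply]
    rw [this]
    simp [Equiv.Perm.inv_def, hu₁def]


/-- `G ≤ Sym(X)` is Roelcke precompact iff it acts oligomorphically on every union of
finitely many of its orbits. -/
theorem roelckePrecompact_iff_locallyOligo {X : Type*} (G : Subgroup (Equiv.Perm X)) :
    RoelckePrecompact G ↔ ∀ Y : Set X, IsFinOrbitUnion G Y → Oligo G Y := by
  exact ⟨fun h => rp_to_lo G h, fun h => lo_to_rp G h⟩
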